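/- The set D_ω = {0} ∪ [ω]^2, equipped with the topology induced from B_ω^#, is not a retract of B_ω^#: there is no continuous map r : B_ω^# → D_ω whose restriction to D_ω is the identity. -/

import Mathlib

open scoped Pointwise

/-- The Bohr topology on an abelian group `G`: the initial topology induced by the
family of all group homomorphisms from `G` to the circle group `ℝ/ℤ`. -/
noncomputable def bohrTopology (G : Type*) [AddCommGroup G] : TopologicalSpace G :=
  ⨅ χ : G →+ AddCircle (1 : ℝ), TopologicalSpace.induced χ inferInstance

namespace BohrRetractAux

abbrev BB : Type := ℕ →₀ ZMod 2
abbrev Hom : Type := BB →+ AddCircle (1 : ℝ)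

noncomputable def half : AddCircle (1:ℝ) := ((2⁻¹ : ℝ) : AddCircle (1:ℝ))

lemma half_add_half : half + half = 0 := by
  rw [half, ← QuotientAddGroup.mk_add]
  norm_num

lemma half_ne_zero : half ≠ 0 := by
  intro h
  rw [half, AddCircle.coe_eq_zero_iff] at h
  obtain ⟨n, hn⟩ := h
  rw [zsmul_eq_mul, mul_one] at hn
  rcases le_or_gt n 0 with h' | h'
  · have : (n:ℝ) ≤ 0 := by exact_mod_cast h'
    nlinarith
  · have : (1:ℝ) ≤ (n:ℝ) := by exact_mod_cast h'
    nlinarith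

lemma two_torsion (v : AddCircle (1:ℝ)) (hv : v + v = 0) : v = 0 ∨ v = half := by
  induction v using QuotientAddGroup.induction_on with
  | _ t =>
    rw [← QuotientAddGroup.mk_add, AddCircle.coe_eq_zero_iff] at hv
    obtain ⟨n, hn⟩ := hv
    rw [zsmul_eq_mul, mul_one] at hn
    rcases Int.even_or_odd n with ⟨k, hk⟩ | ⟨k, hk⟩
    · left
      rw [AddCircle.coe_eq_zero_iff]
      refine ⟨k, ?_⟩
      rw [zsmul_eq_mul, mul_one]
      have : (n : ℝ) = (k:ℝ) + (k:ℝ) := by exact_mod_cast congrArg Int.cast hk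
      linarith
    · right
      rw [half, QuotientAddGroup.eq_iff_sub_mem, AddSubgroup.mem_zmultiples_iff]
      refine ⟨k, ?_⟩
      rw [zsmul_eq_mul, mul_one]
      have : (n : ℝ) = 2*(k:ℝ) + 1 := by exact_mod_cast congrArg Int.cast hk
      linarith

noncomputable def ee (i : ℕ) : BB := Finsupp.single i 1
noncomputable def pr (a b : ℕ) : BB := ee a + ee b

lemma ee_apply_self (i : ℕ) : ee i i = 1 := by simp [ee]

lemma ee_apply_ne {i j : ℕ} (h : j ≠ i) : ee i j = 0 := by
  rw [ee, Finsupp.single_apply_eq_zero]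
  intro hh; exact absurd hh h

lemma pr_apply_left {a b : ℕ} (h : a ≠ b) : pr a b a = 1 := by
  rw [pr, Finsupp.add_apply, ee_apply_self, ee_apply_ne h, add_zero]

lemma pr_apply_right {a b : ℕ} (h : a ≠ b) : pr a b b = 1 := by
  rw [pr, Finsupp.add_apply, ee_apply_self, ee_apply_ne h.symm, zero_add]

lemma pr_card {a b : ℕ} (h : a ≠ b) : (pr a b).support.card = 2 := by
  classical
  rw [pr, ee, ee, Finsupp.support_add_eq]
  · rw [Finsupp.support_single_ne_zero a (one_ne_zero), Finsupp.support_single_ne_zero b (one_ne_zero)]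
    rw [show ({a} ∪ {b} : Finset ℕ) = {a, b} by rfl]
    exact Finset.card_pair h
  · rw [Finsupp.support_single_ne_zero a (one_ne_zero), Finsupp.support_single_ne_zero b (one_ne_zero)]
    exact Finset.disjoint_singleton.2 h

lemma eq_pr {y : BB} (hy : y = 0 ∨ y.support.card = 2) {a b : ℕ} (hab : a ≠ b)
    (ha : y a = 1) (hb : y b = 1) : y = pr a b := by
  classical
  rcases hy with rfl | hy
  · rw [Finsupp.coe_zero, Pi.zero_apply] at ha
    exact absurd ha (by decide)
  · have hsub : ({a, b} : Finset ℕ) ⊆ y.support := by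
      intro i hi
      rcases Finset.mem_insert.1 hi with rfl | hi
      · rw [Finsupp.mem_support_iff, ha]; decide
      · rw [Finset.mem_singleton] at hi; subst hi
        rw [Finsupp.mem_support_iff, hb]; decide
    have hss : ({a,b} : Finset ℕ) = y.support :=
      Finset.eq_of_subset_of_card_le hsub (by rw [hy, Finset.card_pair hab])
    ext i
    by_cases hia : i = a
    · subst hia; rw [ha, pr_apply_left hab]
    · by_cases hib : i = b
      · subst hib; rw [hb, pr_apply_right hab]
      · have : i ∉ y.support := by rw [← hss]; simp [hia, hib]
        rw [Finsupp.notMem_support_iff.1 this, pr, Finsupp.add_apply,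
          ee_apply_ne hia, ee_apply_ne hib, add_zero]

lemma bb_add_self (x : BB) : x + x = 0 := by
  ext i
  rw [Finsupp.add_apply, Finsupp.coe_zero, Pi.zero_apply]
  exact (show ∀ c : ZMod 2, c + c = 0 by decide) _

lemma hom_add_self (ψ : Hom) (x : BB) : ψ x + ψ x = 0 := by
  rw [← map_add, bb_add_self, map_zero]

lemma hom_val (ψ : Hom) (x : BB) : ψ x = 0 ∨ ψ x = half :=
  two_torsion _ (hom_add_self ψ x)

noncomputable def iota : ZMod 2 →+ AddCircle (1:ℝ) where
  toFun c := if c = 0 then 0 else half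
  map_zero' := if_pos rfl
  map_add' a b := by
    show (if a + b = 0 then (0:AddCircle (1:ℝ)) else half)
        = (if a = 0 then (0:AddCircle (1:ℝ)) else half) + (if b = 0 then (0:AddCircle (1:ℝ)) else half)
    rcases (show ∀ c : ZMod 2, c = 0 ∨ c = 1 by decide) a with rfl | rfl <;>
      rcases (show ∀ c : ZMod 2, c = 0 ∨ c = 1 by decide) b with rfl | rfl
    · simp
    · simp
    · simp
    · rw [show (1+1 : ZMod 2) = 0 by decide, if_pos rfl, if_neg (show (1:ZMod 2) ≠ 0 by decide)]
      exact half_add_half.symm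

lemma iota_apply (c : ZMod 2) : iota c = if c = 0 then 0 else half := rfl

lemma iota_one : iota 1 = half := by
  rw [iota_apply, if_neg (show (1:ZMod 2) ≠ 0 by decide)]

lemma iota_eq_half {c : ZMod 2} (h : iota c = half) : c = 1 := by
  rcases (show ∀ c : ZMod 2, c = 0 ∨ c = 1 by decide) c with rfl | rfl
  · rw [map_zero] at h
    exact absurd h.symm half_ne_zero
  · rfl

noncomputable def evalHom (i : ℕ) : Hom := iota.comp (Finsupp.applyAddHom i)

lemma evalHom_apply (i : ℕ) (x : BB) : evalHom i x = iota (x i) := rfl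

open Classical in
noncomputable def chiS (S : ℕ → Prop) : Hom :=
  Finsupp.liftAddHom (fun i => if S i then iota else 0)

open Classical in
lemma chiS_ee_mem {S : ℕ → Prop} {i : ℕ} (h : S i) : chiS S (ee i) = half := by
  rw [chiS, ee, Finsupp.liftAddHom_apply_single, if_pos h, iota_one]

open Classical in
lemma chiS_ee_not {S : ℕ → Prop} {i : ℕ} (h : ¬ S i) : chiS S (ee i) = 0 := by
  rw [chiS, ee, Finsupp.liftAddHom_apply_single, if_neg h, AddMonoidHom.zero_apply]

theorem bohr_mem_nhds (χ : Hom) (x : BB) :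
    {y : BB | χ y = χ x} ∈ @nhds BB (bohrTopology BB) x := by
  have hle : bohrTopology BB ≤ TopologicalSpace.induced χ inferInstance := iInf_le _ χ
  refine nhds_mono hle ?_
  rw [nhds_induced, Filter.mem_comap]
  rcases hom_val χ x with h | h
  · refine ⟨{half}ᶜ, compl_singleton_mem_nhds (by rw [h]; exact half_ne_zero.symm), ?_⟩
    intro y hy
    rcases hom_val χ y with h' | h'
    · simp only [Set.mem_setOf_eq, h, h']
    · exact absurd h' (by simpa using hy)
  · refine ⟨{0}ᶜ, compl_singleton_mem_nhds (by rw [h]; exact half_ne_zero), ?_⟩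
    intro y hy
    rcases hom_val χ y with h' | h'
    · exact absurd h' (by simpa using hy)
    · simp only [Set.mem_setOf_eq, h, h']

theorem bohr_nhds_basis (x : BB) (s : Set BB) (hs : s ∈ @nhds BB (bohrTopology BB) x) :
    ∃ Φ : List Hom, ∀ y, (∀ ψ ∈ Φ, ψ y = ψ x) → y ∈ s := by
  rw [bohrTopology, nhds_iInf, Filter.mem_iInf] at hs
  obtain ⟨I, hIfin, V, hV, rfl⟩ := hs
  have key : ∀ i : I, ∃ t, t ∈ nhds ((i : Hom) x) ∧ (i : Hom) ⁻¹' t ⊆ V i := by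
    intro i
    have := hV i
    rw [nhds_induced, Filter.mem_comap] at this
    obtain ⟨t, ht, hsub⟩ := this
    exact ⟨t, ht, hsub⟩
  choose t ht hsub using key
  refine ⟨hIfin.toFinset.toList, ?_⟩
  intro y hy
  rw [Set.mem_iInter]
  intro i
  apply hsub i
  have : (i : Hom) y = (i : Hom) x := hy _ (by rw [Finset.mem_toList, Set.Finite.mem_toFinset]; exact i.2)
  rw [Set.mem_preimage, this]
  exact mem_of_mem_nhds (ht i)

theorem match_lemma (x : ℕ → BB) (lst : List Hom) (s : Set ℕ) (hs : s.Infinite) :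
    ∃ t, t ⊆ s ∧ t.Infinite ∧ ∀ ψ ∈ lst, ∀ i ∈ t, ∀ j ∈ t, ψ (x i) = ψ (x j) := by
  induction lst generalizing s with
  | nil => exact ⟨s, subset_rfl, hs, by simp⟩
  | cons ψ rest ih =>
    obtain ⟨t, hts, htinf, hmatch⟩ := ih s hs
    have hsplit : t ⊆ {i ∈ t | ψ (x i) = 0} ∪ {i ∈ t | ψ (x i) = half} := by
      intro i hi
      rcases hom_val ψ (x i) with h | h
      · exact Or.inl ⟨hi, h⟩
      · exact Or.inr ⟨hi, h⟩
    have hone : {i ∈ t | ψ (x i) = 0}.Infinite ∨ {i ∈ t | ψ (x i) = half}.Infinite := by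
      by_contra hcon
      push_neg at hcon
      exact htinf (Set.Finite.subset (hcon.1.union hcon.2) hsplit)
    rcases hone with h | h
    · refine ⟨_, fun i hi => hts hi.1, h, ?_⟩
      intro φ hφ i hi j hj
      rcases List.mem_cons.1 hφ with rfl | hφ
      · rw [hi.2, hj.2]
      · exact hmatch φ hφ i hi.1 j hj.1
    · refine ⟨_, fun i hi => hts hi.1, h, ?_⟩
      intro φ hφ i hi j hj
      rcases List.mem_cons.1 hφ with rfl | hφ
      · rw [hi.2, hj.2]
      · exact hmatch φ hφ i hi.1 j hj.1

lemma le_foldr_max (l : List ℕ) (x : ℕ) (h : x ∈ l) : x ≤ l.foldr max 0 := by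
  induction l with
  | nil => simp at h
  | cons a l ih =>
    rcases List.mem_cons.1 h with rfl | h
    · exact le_max_left _ _
    · exact le_trans (ih h) (le_max_right _ _)

lemma seq_ex (Q : ℕ → ℕ → List Hom) (l : List (ℕ × ℕ)) :
    ∃ p : ℕ × ℕ, (∀ q ∈ l, q.2 < p.1) ∧ p.1 < p.2 ∧
      ∀ q ∈ l, ∀ ψ ∈ Q q.1 q.2, ψ (ee p.1) = ψ (ee p.2) := by
  obtain ⟨t, -, htinf, hmatch⟩ :=
    match_lemma ee (l.flatMap (fun q => Q q.1 q.2)) Set.univ Set.infinite_univ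
  obtain ⟨a, hat, haN⟩ := htinf.exists_gt ((l.map Prod.snd).foldr max 0)
  obtain ⟨b, hbt, hab⟩ := htinf.exists_gt a
  refine ⟨(a, b), ?_, hab, ?_⟩
  · intro q hq
    exact lt_of_le_of_lt (le_foldr_max _ _ (List.mem_map_of_mem hq)) haN
  · intro q hq ψ hψ
    exact hmatch ψ (List.mem_flatMap.2 ⟨q, hq, hψ⟩) a hat b hbt

noncomputable def seqH (Q : ℕ → ℕ → List Hom) : ℕ → List (ℕ × ℕ)
  | 0 => []
  | n+1 => seqH Q n ++ [Classical.choose (seq_ex Q (seqH Q n))]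

noncomputable def seqP (Q : ℕ → ℕ → List Hom) (n : ℕ) : ℕ × ℕ :=
  Classical.choose (seq_ex Q (seqH Q n))

lemma seqH_succ (Q : ℕ → ℕ → List Hom) (n : ℕ) :
    seqH Q (n+1) = seqH Q n ++ [seqP Q n] := rfl

lemma mem_seqH (Q : ℕ → ℕ → List Hom) {n m : ℕ} (h : n < m) : seqP Q n ∈ seqH Q m := by
  induction m with
  | zero => omega
  | succ k ih =>
    rw [seqH_succ]
    rcases Nat.lt_succ_iff_lt_or_eq.1 h with h' | h'
    · exact List.mem_append_left _ (ih h')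
    · subst h'; exact List.mem_append_right _ (List.mem_singleton_self _)

lemma seqP_spec (Q : ℕ → ℕ → List Hom) (n : ℕ) :
    (∀ q ∈ seqH Q n, q.2 < (seqP Q n).1) ∧ (seqP Q n).1 < (seqP Q n).2 ∧
      ∀ q ∈ seqH Q n, ∀ ψ ∈ Q q.1 q.2, ψ (ee (seqP Q n).1) = ψ (ee (seqP Q n).2) :=
  Classical.choose_spec (seq_ex Q (seqH Q n))

lemma seq_ab (Q : ℕ → ℕ → List Hom) (n : ℕ) : (seqP Q n).1 < (seqP Q n).2 :=
  (seqP_spec Q n).2.1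

lemma seq_lt (Q : ℕ → ℕ → List Hom) {n m : ℕ} (h : n < m) : (seqP Q n).2 < (seqP Q m).1 :=
  (seqP_spec Q m).1 _ (mem_seqH Q h)

lemma seq_match (Q : ℕ → ℕ → List Hom) {n m : ℕ} (h : n < m) :
    ∀ ψ ∈ Q (seqP Q n).1 (seqP Q n).2, ψ (ee (seqP Q m).1) = ψ (ee (seqP Q m).2) :=
  (seqP_spec Q m).2.2 _ (mem_seqH Q h)

end BohrRetractAux

open BohrRetractAux in
/-- (Gladdines) `𝒟_ω = {0} ∪ [ω]²` is not a retract of `B_ω^#`. -/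
theorem bohr_pairs_not_retract :
    letI := bohrTopology (ℕ →₀ ZMod 2)
    ¬ ∃ r : (ℕ →₀ ZMod 2) → {x : ℕ →₀ ZMod 2 // x = 0 ∨ x.support.card = 2},
        Continuous r ∧
          ∀ x : {x : ℕ →₀ ZMod 2 // x = 0 ∨ x.support.card = 2}, r ↑x = x := by
  rintro ⟨r, hcont, hretr⟩
  classical
  letI : TopologicalSpace (ℕ →₀ ZMod 2) := bohrTopology (ℕ →₀ ZMod 2)
  -- Step 1: continuity at each pair
  have step1 : ∀ a b : ℕ, ∃ Φ : List Hom, a < b → ∀ y : BB,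
      (∀ ψ ∈ Φ, ψ y = ψ (pr a b)) → ((r y : BB)) = pr a b := by
    intro a b
    by_cases hab : a < b
    · have hD : pr a b = 0 ∨ (pr a b).support.card = 2 := Or.inr (pr_card hab.ne)
      have hrp : r (pr a b) = ⟨pr a b, hD⟩ := hretr ⟨pr a b, hD⟩
      have hsing : ({⟨pr a b, hD⟩} : Set {x : BB // x = 0 ∨ x.support.card = 2}) ∈
          nhds (⟨pr a b, hD⟩ : {x : BB // x = 0 ∨ x.support.card = 2}) := by
        rw [nhds_subtype_eq_comap]
        refine Filter.mem_comap.2 ⟨{y : BB | evalHom a y = evalHom a (pr a b)} ∩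
          {y : BB | evalHom b y = evalHom b (pr a b)},
          Filter.inter_mem (bohr_mem_nhds _ _) (bohr_mem_nhds _ _), ?_⟩
        rintro ⟨y, hy⟩ ⟨h1, h2⟩
        have h1' : y a = 1 := by
          apply iota_eq_half
          rw [← evalHom_apply, h1, evalHom_apply, pr_apply_left hab.ne, iota_one]
        have h2' : y b = 1 := by
          apply iota_eq_half
          rw [← evalHom_apply, h2, evalHom_apply, pr_apply_right hab.ne, iota_one]
        have : y = pr a b := eq_pr hy hab.ne h1' h2'
        simp only [Set.mem_singleton_iff]
        exact Subtype.ext this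
      have htd := hcont.tendsto (pr a b)
      rw [hrp] at htd
      have hpre : r ⁻¹' {⟨pr a b, hD⟩} ∈ @nhds BB (bohrTopology BB) (pr a b) := htd hsing
      obtain ⟨Φ, hΦ⟩ := bohr_nhds_basis (pr a b) _ hpre
      refine ⟨Φ, fun _ y hy => ?_⟩
      have := hΦ y hy
      simp only [Set.mem_preimage, Set.mem_singleton_iff] at this
      rw [this]
    · exact ⟨[], fun h => absurd h hab⟩
  choose Q hQ using step1
  -- the sequence of pairs
  set a : ℕ → ℕ := fun n => (seqP Q n).1 with ha
  set b : ℕ → ℕ := fun n => (seqP Q n).2 with hb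
  -- the character χ
  set S : ℕ → Prop := fun i => ∃ k, a k = i with hS
  set χ : Hom := chiS S with hχ
  have hχa : ∀ n, χ (ee (a n)) = half := fun n => chiS_ee_mem ⟨n, rfl⟩
  have hχb : ∀ n, χ (ee (b n)) = 0 := by
    intro n
    apply chiS_ee_not
    rintro ⟨k, hk⟩
    have hk' : (seqP Q k).1 = (seqP Q n).2 := hk
    rcases lt_trichotomy k n with h | h | h
    · have h1 := seq_ab Q k
      have h2 := seq_lt Q h
      have h3 := seq_ab Q n
      omega
    · subst h
      have := seq_ab Q k
      omega
    · have := seq_lt Q h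
      have := seq_ab Q n
      omega
  -- continuity at 0
  have hr0 : r 0 = ⟨0, Or.inl rfl⟩ := hretr ⟨0, Or.inl rfl⟩
  have hU : (Subtype.val ⁻¹' {y : BB | χ y ≠ half} :
      Set {x : BB // x = 0 ∨ x.support.card = 2}) ∈
      nhds (⟨0, Or.inl rfl⟩ : {x : BB // x = 0 ∨ x.support.card = 2}) := by
    rw [nhds_subtype_eq_comap]
    refine Filter.mem_comap.2 ⟨{y : BB | χ y = χ 0}, bohr_mem_nhds _ _, ?_⟩
    rintro ⟨y, hy⟩ h1
    have h1' : χ y = χ 0 := h1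
    show ¬ (χ y = half)
    rw [h1', map_zero]
    exact fun e => half_ne_zero e.symm
  have htd0 := hcont.tendsto 0
  rw [hr0] at htd0
  have hpre0 : r ⁻¹' (Subtype.val ⁻¹' {y : BB | χ y ≠ half}) ∈
      @nhds BB (bohrTopology BB) 0 := htd0 hU
  obtain ⟨Φ0, hΦ0⟩ := bohr_nhds_basis 0 _ hpre0
  -- pigeonhole: two pairs with the same Φ0-profile
  obtain ⟨t, -, htinf, hsame⟩ :=
    match_lemma (fun k => pr (a k) (b k)) Φ0 Set.univ Set.infinite_univ
  obtain ⟨n, hn⟩ := htinf.nonempty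
  obtain ⟨m, hm, hnm⟩ := htinf.exists_gt n
  -- the contradiction point
  set X : BB := pr (a n) (b n) + pr (a m) (b m) with hX
  have hmem : ∀ ψ ∈ Φ0, ψ X = ψ 0 := by
    intro ψ hψ
    rw [hX, map_add, ← hsame ψ hψ n hn m hm, hom_add_self, map_zero]
  have hrX : (r X : BB) = pr (a n) (b n) := by
    apply hQ (a n) (b n) (seq_ab Q n)
    intro ψ hψ
    have hmatch := seq_match Q hnm ψ hψ
    rw [hX, map_add, show pr (a m) (b m) = ee (a m) + ee (b m) from rfl, map_add,
      ← hmatch, hom_add_self, add_zero]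
  have hcontr := hΦ0 X hmem
  simp only [Set.mem_preimage, Set.mem_setOf_eq] at hcontr
  apply hcontr
  rw [hrX, show pr (a n) (b n) = ee (a n) + ee (b n) from rfl, map_add, hχa, hχb, add_zero]
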